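/- Let f : Fin n → Fin k be a function with Young stabilizer S_f, let λ_l = |f⁻¹(l)|, fix two distinct elements a, b ∈ Fin n and an index i ∈ Fin k with λ_i ≥ 2. Then the number of right cosets [g] of S_f in Perm (Fin n) with f(g(a)) = i and f(g(b)) = i equals (n−2)! / ((λ_i − 2)! · ∏_{l ≠ i} (λ_l)!). -/

import Mathlib

open Finset

section Helpers

variable {α κ : Type*} [Fintype α] [DecidableEq α] [Fintype κ] [DecidableEq κ]

/-- cardinality of the fiber of `f` over `l` -/
def fibCard (f : α → κ) (l : κ) : ℕ := (Finset.univ.filter fun x => f x = l).card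

lemma fibCard_comp_perm (f : α → κ) (g : Equiv.Perm α) (l : κ) :
    fibCard (f ∘ g) l = fibCard f l := by
  unfold fibCard
  apply Finset.card_bij' (fun x _ => g x) (fun y _ => g⁻¹ y) <;>
    simp [Function.comp]

lemma exists_perm_of_fibCard_eq {f h : α → κ} (hfib : ∀ l, fibCard h l = fibCard f l) :
    ∃ g : Equiv.Perm α, f ∘ g = h := by
  have e : ∀ l, {x // h x = l} ≃ {x // f x = l} := by
    intro l
    apply Fintype.equivOfCardEq
    rw [Fintype.card_subtype, Fintype.card_subtype]
    exact hfib l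
  refine ⟨(Equiv.sigmaFiberEquiv h).symm.trans
    ((Equiv.sigmaCongrRight e).trans (Equiv.sigmaFiberEquiv f)), ?_⟩
  funext x
  simp [Equiv.sigmaFiberEquiv, Equiv.sigmaCongrRight]
  exact (e (h x) ⟨x, rfl⟩).2

set_option linter.unusedSectionVars false

/-- assemble a family of fiber permutations into a permutation of `α` -/
def assemble (f : α → κ) (π : ∀ l, Equiv.Perm {x // f x = l}) : Equiv.Perm α :=
  (Equiv.sigmaFiberEquiv f).symm.trans ((Equiv.sigmaCongrRight π).trans (Equiv.sigmaFiberEquiv f))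

lemma assemble_apply (f : α → κ) (π : ∀ l, Equiv.Perm {x // f x = l}) (x : α) :
    assemble f π x = (π (f x) ⟨x, rfl⟩).val := rfl

lemma card_stab (f : α → κ) :
    Nat.card {σ : Equiv.Perm α // f ∘ ⇑σ = f} = ∏ l, (fibCard f l).factorial := by
  have key : Nat.card (∀ l, Equiv.Perm {x // f x = l})
      = Nat.card {σ : Equiv.Perm α // f ∘ ⇑σ = f} := by
    apply Nat.card_eq_of_bijective (fun π =>
      ⟨assemble f π, funext fun x => (π (f x) ⟨x, rfl⟩).2⟩)
    constructor
    · intro π π' hππ'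
      have h : ∀ x : α, assemble f π x = assemble f π' x := by
        intro x
        exact congrFun (congrArg (fun σ => ⇑(σ : {σ : Equiv.Perm α // f ∘ ⇑σ = f}).1) hππ') x
      funext l
      ext ⟨v, hv⟩
      subst hv
      have := h v
      rw [assemble_apply, assemble_apply] at this
      exact this
    · rintro ⟨σ, hσ⟩
      refine ⟨fun l => Equiv.subtypeEquiv σ (fun x => by
        have := congrFun hσ x
        simp only [Function.comp_apply] at this
        rw [this]), ?_⟩
      apply Subtype.ext
      ext x
      rfl
  rw [← key, Nat.card_eq_fintype_card]
  rw [Fintype.card_pi]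
  apply Finset.prod_congr rfl
  intro l _
  rw [Fintype.card_perm, Fintype.card_subtype]
  rfl

lemma card_good_mul (f : α → κ) :
    Nat.card {h : α → κ // ∀ l, fibCard h l = fibCard f l} * ∏ l, (fibCard f l).factorial
      = (Fintype.card α).factorial := by
  classical
  have E : Equiv.Perm α ≃
      Σ h : {h : α → κ // ∀ l, fibCard h l = fibCard f l}, {σ : Equiv.Perm α // f ∘ ⇑σ = h.1} :=
    { toFun := fun g => ⟨⟨f ∘ g, fun l => fibCard_comp_perm f g l⟩, g, rfl⟩
      invFun := fun x => x.2.1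
      left_inv := fun g => rfl
      right_inv := by
        rintro ⟨⟨h, hh⟩, σ, hσ⟩
        have hσ' : f ∘ ⇑σ = h := hσ
        revert hh
        subst hσ'
        intro hh hσ
        rfl }
  have hfib : ∀ h : {h : α → κ // ∀ l, fibCard h l = fibCard f l},
      Nat.card {σ : Equiv.Perm α // f ∘ ⇑σ = h.1} = ∏ l, (fibCard f l).factorial := by
    intro h
    obtain ⟨g0, hg0⟩ := exists_perm_of_fibCard_eq h.2
    rw [← card_stab f]
    apply Nat.card_eq_of_bijective (fun τ =>
      ⟨τ.1 * g0⁻¹, by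
        funext x
        have h1 := congrFun τ.2 (g0⁻¹ x)
        have h2 := congrFun hg0 (g0⁻¹ x)
        simp only [Function.comp_apply, Equiv.Perm.mul_apply] at h1 h2 ⊢
        rw [h1, ← h2]
        simp⟩)
    constructor
    · intro τ τ' hττ'
      apply Subtype.ext
      have := congrArg Subtype.val hττ'
      exact mul_right_cancel this
    · rintro ⟨σ, hσ⟩
      refine ⟨⟨σ * g0, ?_⟩, by apply Subtype.ext; simp⟩
      funext x
      have h1 := congrFun hσ (g0 x)
      have h2 := congrFun hg0 x
      simp only [Function.comp_apply, Equiv.Perm.mul_apply] at h1 h2 ⊢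
      rw [h1, h2]
  have := Nat.card_congr E
  rw [Nat.card_eq_fintype_card, Fintype.card_perm] at this
  rw [Nat.card_eq_fintype_card, Fintype.card_sigma] at this
  have hsum : (∑ h : {h : α → κ // ∀ l, fibCard h l = fibCard f l},
      Fintype.card {σ : Equiv.Perm α // f ∘ ⇑σ = h.1})
      = Fintype.card {h : α → κ // ∀ l, fibCard h l = fibCard f l}
        * ∏ l, (fibCard f l).factorial := by
    rw [Finset.sum_congr rfl (fun h _ => by rw [← Nat.card_eq_fintype_card, hfib h])]
    rw [Finset.sum_const, smul_eq_mul, Finset.card_univ]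
  rw [Nat.card_eq_fintype_card, ← hsum]
  exact this.symm

lemma fibCard_restrict {a b : α} (hab : a ≠ b) {i : κ} (h : α → κ)
    (ha : h a = i) (hb : h b = i) (l : κ) :
    fibCard (fun x : ↥(({a, b} : Finset α)ᶜ) => h x.val) l + (if l = i then 2 else 0)
      = fibCard h l := by
  classical
  have h1 : fibCard (fun x : ↥(({a, b} : Finset α)ᶜ) => h x.val) l
      = (Finset.filter (fun x => h x = l) (({a, b} : Finset α)ᶜ)).card := by
    unfold fibCard
    apply Finset.card_bij' (fun (x : ↥(({a, b} : Finset α)ᶜ)) _ => x.val)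
      (fun y hy => (⟨y, (Finset.mem_filter.mp hy).1⟩ : ↥(({a, b} : Finset α)ᶜ)))
    case hi =>
      intro y hy
      simp only [Finset.mem_filter, Finset.mem_univ, true_and] at hy
      simpa [hy] using y.2
    case hj =>
      intro x hx
      simp only [Finset.mem_filter] at hx
      simp [hx.2]
    case left_inv => intro x hx; rfl
    case right_inv => intro y hy; rfl
  have h2 : (Finset.filter (fun x => h x = l) ({a, b} : Finset α)).card
      = if l = i then 2 else 0 := by
    by_cases hl : l = i
    · subst hl
      rw [if_pos rfl]
      rw [Finset.filter_insert, Finset.filter_singleton]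
      simp [ha, hb, hab, Finset.card_insert_of_notMem]
    · rw [if_neg hl]
      rw [Finset.filter_insert, Finset.filter_singleton]
      have hha : ¬ (h a = l) := by rw [ha]; exact fun e => hl e.symm
      have hhb : ¬ (h b = l) := by rw [hb]; exact fun e => hl e.symm
      simp [hha, hhb]
  have h3 : (Finset.univ : Finset α) = (({a, b} : Finset α)ᶜ) ∪ ({a, b} : Finset α) := by
    rw [Finset.union_comm, Finset.union_compl]
  rw [h1]
  unfold fibCard
  rw [h3, Finset.filter_union,
    Finset.card_union_of_disjoint (Finset.disjoint_filter_filter disjoint_compl_left), h2]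

lemma exists_perm_two {a b x y : α} (hab : a ≠ b) (hxy : x ≠ y) :
    ∃ g : Equiv.Perm α, g a = x ∧ g b = y := by
  refine ⟨(Equiv.swap ((Equiv.swap a x) b) y) * (Equiv.swap a x), ?_, ?_⟩
  · simp only [Equiv.Perm.mul_apply, Equiv.swap_apply_left]
    apply Equiv.swap_apply_of_ne_of_ne
    · intro e
      exact hab ((Equiv.swap a x).injective (by rw [Equiv.swap_apply_left, ← e])).symm
    · exact hxy
  · simp only [Equiv.Perm.mul_apply]
    exact Equiv.swap_apply_left _ _

end Helpers

/-- The Young stabilizer of a function `f : Fin n → Fin k`: the subgroup of permutations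
`σ` of `Fin n` with `f ∘ σ = f`. -/
def youngStabilizer (n k : ℕ) (f : Fin n → Fin k) : Subgroup (Equiv.Perm (Fin n)) where
  carrier := {σ : Equiv.Perm (Fin n) | f ∘ ⇑σ = f}
  one_mem' := by
    funext i
    simp
  mul_mem' := by
    intro σ τ hσ hτ
    funext i
    have h1 := congrFun hσ (τ i)
    have h2 := congrFun hτ i
    simp only [Function.comp_apply] at h1 h2 ⊢
    simp [Equiv.Perm.mul_apply, h1, h2]
  inv_mem' := by
    intro σ hσ
    funext i
    have h1 := congrFun hσ (σ⁻¹ i)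
    simp only [Function.comp_apply, Equiv.Perm.coe_inv, Equiv.apply_symm_apply] at h1 ⊢
    exact h1.symm

/-- For distinct `a, b` and an index `i` with fiber of cardinality at least 2, the number
of right cosets `[g]` of the Young stabilizer with `f (g a) = i` and `f (g b) = i` equals
`(n-2)! / ((λ_i - 2)! * ∏_{l ≠ i} (λ_l)!)`. -/
theorem stmt4 (n k : ℕ) (f : Fin n → Fin k) (a b : Fin n) (hab : a ≠ b) (i : Fin k)
    (hi : 2 ≤ (Finset.univ.filter fun x => f x = i).card) :
    Nat.card {c : Quotient (QuotientGroup.rightRel (youngStabilizer n k f)) //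
        ∃ g : Equiv.Perm (Fin n),
          Quotient.mk (QuotientGroup.rightRel (youngStabilizer n k f)) g = c ∧
            f (g a) = i ∧ f (g b) = i} =
      Nat.factorial (n - 2) /
        (Nat.factorial ((Finset.univ.filter fun x => f x = i).card - 2) *
          ∏ l ∈ Finset.univ.erase i,
            Nat.factorial ((Finset.univ.filter fun x => f x = l).card)) := by
  classical
  set S := youngStabilizer n k f with hS
  -- a witness function with the right fibers taking value i at a and b
  have hi' : 1 < (Finset.univ.filter fun x => f x = i).card := hi
  obtain ⟨x, hx, y, hy, hxy⟩ := Finset.one_lt_card.mp hi'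
  rw [Finset.mem_filter] at hx hy
  obtain ⟨g0, hg0a, hg0b⟩ := exists_perm_two (α := Fin n) hab hxy
  set h0 : Fin n → Fin k := f ∘ ⇑g0 with hh0
  have h0a : h0 a = i := by simp only [hh0, Function.comp_apply, hg0a]; exact hx.2
  have h0b : h0 b = i := by simp only [hh0, Function.comp_apply, hg0b]; exact hy.2
  have h0fib : ∀ l, fibCard h0 l = fibCard f l := fun l => fibCard_comp_perm f g0 l
  set s : Finset (Fin n) := ({a, b} : Finset (Fin n))ᶜ with hs
  set f' : ↥s → Fin k := fun z => h0 z.val with hf'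
  -- Step 1 : cosets with the condition  ≃  functions with prescribed fibers and values
  have step1 : Nat.card {c : Quotient (QuotientGroup.rightRel S) //
      ∃ g : Equiv.Perm (Fin n), Quotient.mk (QuotientGroup.rightRel S) g = c ∧
        f (g a) = i ∧ f (g b) = i}
      = Nat.card {h : Fin n → Fin k //
          (∀ l, fibCard h l = fibCard f l) ∧ h a = i ∧ h b = i} := by
    have wd : ∀ (g g' : Equiv.Perm (Fin n)), (QuotientGroup.rightRel S) g g' →
        f ∘ ⇑g = f ∘ ⇑g' := by
      intro g g' hgg'
      rw [QuotientGroup.rightRel_apply] at hgg'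
      have hmem : f ∘ ⇑(g' * g⁻¹) = f := hgg'
      funext z
      have := congrFun hmem (g z)
      simp only [Function.comp_apply, Equiv.Perm.mul_apply, Equiv.Perm.coe_inv, Equiv.symm_apply_apply] at this ⊢
      exact this.symm
    set Φ : Quotient (QuotientGroup.rightRel S) → (Fin n → Fin k) :=
      Quotient.lift (fun g : Equiv.Perm (Fin n) => f ∘ ⇑g) wd with hΦ
    have hΦmk : ∀ g : Equiv.Perm (Fin n),
        Φ (Quotient.mk (QuotientGroup.rightRel S) g) = f ∘ ⇑g := fun g => rfl
    have prop : ∀ c : {c : Quotient (QuotientGroup.rightRel S) //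
        ∃ g : Equiv.Perm (Fin n), Quotient.mk (QuotientGroup.rightRel S) g = c ∧
          f (g a) = i ∧ f (g b) = i},
        (∀ l, fibCard (Φ c.1) l = fibCard f l) ∧ Φ c.1 a = i ∧ Φ c.1 b = i := by
      rintro ⟨c, g, rfl, hga, hgb⟩
      rw [hΦmk]
      exact ⟨fun l => fibCard_comp_perm f g l, hga, hgb⟩
    apply Nat.card_eq_of_bijective (fun c => ⟨Φ c.1, prop c⟩)
    constructor
    · intro c1 c2 hcc'
      have h2 : Φ c1.1 = Φ c2.1 := congrArg Subtype.val hcc'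
      obtain ⟨g, hgc, -, -⟩ := c1.2
      obtain ⟨g', hgc', -, -⟩ := c2.2
      rw [← hgc, ← hgc', hΦmk, hΦmk] at h2
      apply Subtype.ext
      rw [← hgc, ← hgc']
      have hmem : g' * g⁻¹ ∈ S := by
        show f ∘ ⇑(g' * g⁻¹) = f
        funext z
        have h3 := congrFun h2 (g⁻¹ z)
        simp only [Function.comp_apply] at h3 ⊢
        simp only [Equiv.Perm.mul_apply]
        rw [← h3]
        simp
      exact Quotient.sound (QuotientGroup.rightRel_apply.mpr hmem)
    · rintro ⟨h, hfib, hha, hhb⟩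
      obtain ⟨g, hg⟩ := exists_perm_of_fibCard_eq hfib
      refine ⟨⟨Quotient.mk (QuotientGroup.rightRel S) g, g, rfl, ?_, ?_⟩, ?_⟩
      · rw [show f (g a) = h a from congrFun hg a]; exact hha
      · rw [show f (g b) = h b from congrFun hg b]; exact hhb
      · apply Subtype.ext
        show Φ (Quotient.mk (QuotientGroup.rightRel S) g) = h
        rw [hΦmk]
        exact hg
  -- Step 2 : restriction to the complement of {a, b}
  have step2 : Nat.card {h : Fin n → Fin k //
        (∀ l, fibCard h l = fibCard f l) ∧ h a = i ∧ h b = i}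
      = Nat.card {h' : ↥s → Fin k // ∀ l, fibCard h' l = fibCard f' l} := by
    have resfib : ∀ (h : Fin n → Fin k), h a = i → h b = i →
        (∀ l, fibCard h l = fibCard f l) →
        ∀ l, fibCard (fun z : ↥s => h z.val) l = fibCard f' l := by
      intro h hha hhb hfib l
      have e1 := fibCard_restrict hab h hha hhb l
      have e2 := fibCard_restrict hab h0 h0a h0b l
      rw [hfib l, ← h0fib l, ← e2] at e1
      exact Nat.add_right_cancel e1
    apply Nat.card_eq_of_bijective (fun h =>
      ⟨fun z : ↥s => h.1 z.val, resfib h.1 h.2.2.1 h.2.2.2 h.2.1⟩)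
    constructor
    · rintro ⟨h, hfib, hha, hhb⟩ ⟨g, gfib, hga, hgb⟩ hhg
      have h1 : ∀ z : ↥s, h z.val = g z.val := by
        intro z
        exact congrFun (congrArg Subtype.val hhg) z
      apply Subtype.ext
      funext z
      show h z = g z
      by_cases hz : z ∈ s
      · exact h1 ⟨z, hz⟩
      · rw [hs, Finset.mem_compl, not_not, Finset.mem_insert, Finset.mem_singleton] at hz
        rcases hz with rfl | rfl
        · rw [hha, hga]
        · rw [hhb, hgb]
    · rintro ⟨h', hfib'⟩
      set ext : Fin n → Fin k := fun z => if hz : z ∈ s then h' ⟨z, hz⟩ else i with hext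
      have hexta : ext a = i := by
        rw [hext]
        have : a ∉ s := by simp [hs]
        simp [this]
      have hextb : ext b = i := by
        rw [hext]
        have : b ∉ s := by simp [hs]
        simp [this]
      have hres : (fun z : ↥s => ext z.val) = h' := by
        funext z
        rw [hext]
        simp only [z.2, dif_pos]
      have hextfib : ∀ l, fibCard ext l = fibCard f l := by
        intro l
        have e1 := fibCard_restrict hab ext hexta hextb l
        have e2 := fibCard_restrict hab h0 h0a h0b l
        rw [hres, hfib' l] at e1
        rw [← e1, ← h0fib l, ← e2]
      refine ⟨⟨ext, hextfib, hexta, hextb⟩, ?_⟩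
      apply Subtype.ext
      exact hres
  -- Step 3 : count functions on the complement with prescribed fibers
  have step3 := card_good_mul f'
  have hcards : Fintype.card ↥s = n - 2 := by
    rw [Fintype.card_coe, hs, Finset.card_compl]
    have : ({a, b} : Finset (Fin n)).card = 2 := by
      rw [Finset.card_insert_of_notMem (by simpa using hab), Finset.card_singleton]
    rw [this, Fintype.card_fin]
  -- fibers of f'
  have hf'i : fibCard f' i = fibCard f i - 2 := by
    have e2 := fibCard_restrict hab h0 h0a h0b i
    rw [if_pos rfl, h0fib i] at e2
    exact Nat.eq_sub_of_add_eq e2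
  have hf'l : ∀ l, l ≠ i → fibCard f' l = fibCard f l := by
    intro l hl
    have e2 := fibCard_restrict hab h0 h0a h0b l
    rw [if_neg hl, Nat.add_zero, h0fib l] at e2
    exact e2
  have hprod : (∏ l, (fibCard f' l).factorial)
      = Nat.factorial (fibCard f i - 2) *
        ∏ l ∈ Finset.univ.erase i, Nat.factorial (fibCard f l) := by
    rw [← Finset.mul_prod_erase Finset.univ (fun l => (fibCard f' l).factorial)
      (Finset.mem_univ i), hf'i]
    congr 1
    apply Finset.prod_congr rfl
    intro l hl
    rw [hf'l l (Finset.ne_of_mem_erase hl)]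
  -- assemble
  have key : Nat.card {c : Quotient (QuotientGroup.rightRel S) //
      ∃ g : Equiv.Perm (Fin n), Quotient.mk (QuotientGroup.rightRel S) g = c ∧
        f (g a) = i ∧ f (g b) = i} *
      (Nat.factorial (fibCard f i - 2) *
        ∏ l ∈ Finset.univ.erase i, Nat.factorial (fibCard f l))
      = Nat.factorial (n - 2) := by
    rw [step1, step2, ← hprod, step3, hcards]
  have hD : 0 < Nat.factorial (fibCard f i - 2) *
      ∏ l ∈ Finset.univ.erase i, Nat.factorial (fibCard f l) := by
    apply Nat.mul_pos (Nat.factorial_pos _)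
    exact Finset.prod_pos fun l _ => Nat.factorial_pos _
  have goal := (Nat.div_eq_of_eq_mul_left hD key.symm).symm
  exact goal
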